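/- Let pSpec denote the contravariant functor from rings to sets sending each ring R to its set of prime partial ideals and each ring homomorphism f : R → S to the map P ↦ f⁻¹(P). Then pSpec, together with the identity natural transformation on its restriction to commutative rings (this restriction equals the prime spectrum functor Spec), is the right Kan extension of Spec along the inclusion of the opposite category of commutative rings into the opposite category of rings. Equivalently and concretely: for every contravariant functor F from rings to sets and every natural transformation η from the restriction of F to commutative rings to Spec, there exists a unique natural transformation δ : F → pSpec whose restriction to commutative rings equals η. -/

import Mathlib

open CategoryTheory


/-- A partial ideal of a (possibly noncommutative) ring `R`: a subset whose intersection
with every commutative subring is an ideal of that subring; elementwise, it contains `0`,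
is closed under sums of commuting members, and absorbs products by commuting elements. -/
def IsPartialIdeal {R : Type*} [Ring R] (I : Set R) : Prop :=
  (0 : R) ∈ I ∧
  (∀ a b : R, a * b = b * a → a ∈ I → b ∈ I → a + b ∈ I) ∧
  (∀ a b : R, a * b = b * a → b ∈ I → a * b ∈ I)

/-- A prime partial ideal: a proper partial ideal `P` such that for commuting `x, y`,
`x * y ∈ P` implies `x ∈ P` or `y ∈ P`. -/
def IsPrimePartialIdeal {R : Type*} [Ring R] (P : Set R) : Prop :=
  IsPartialIdeal P ∧ P ≠ Set.univ ∧
  ∀ x y : R, x * y = y * x → x * y ∈ P → x ∈ P ∨ y ∈ P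

/-- A morphism of partial `k`-algebras from a (possibly noncommutative) `k`-algebra `R`
to `k`. -/
def IsPartialAlgHom (k : Type*) {R : Type*} [CommRing k] [Ring R] [Algebra k R]
    (f : R → k) : Prop :=
  f 0 = 0 ∧ f 1 = 1 ∧
  (∀ (c : k) (a : R), f (c • a) = c * f a) ∧
  (∀ a b : R, a * b = b * a → f (a + b) = f a + f b) ∧
  (∀ a b : R, a * b = b * a → f (a * b) = f a * f b)

theorem IsPrimePartialIdeal.one_not_mem {R : Type*} [Ring R] {P : Set R}
    (hP : IsPrimePartialIdeal P) : (1 : R) ∉ P := by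
  intro h1
  apply hP.2.1
  ext a
  simp only [Set.mem_univ, iff_true]
  simpa using hP.1.2.2 a 1 (by rw [mul_one, one_mul]) h1

theorem IsPrimePartialIdeal.preimage {R S : Type*} [Ring R] [Ring S] (f : R →+* S)
    {P : Set S} (hP : IsPrimePartialIdeal P) : IsPrimePartialIdeal (f ⁻¹' P) := by
  obtain ⟨⟨h0, hadd, hmul⟩, hne, hpr⟩ := hP
  refine ⟨⟨by simp [Set.mem_preimage, h0], ?_, ?_⟩, ?_, ?_⟩
  · intro a b hc ha hb
    simpa [Set.mem_preimage, map_add] using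
      hadd (f a) (f b) (by rw [← map_mul, ← map_mul, hc]) ha hb
  · intro a b hc hb
    simpa [Set.mem_preimage, map_mul] using
      hmul (f a) (f b) (by rw [← map_mul, ← map_mul, hc]) hb
  · intro h
    have h1 : (1 : R) ∈ f ⁻¹' P := h ▸ Set.mem_univ _
    exact IsPrimePartialIdeal.one_not_mem ⟨⟨h0, hadd, hmul⟩, hne, hpr⟩ (by simpa using h1)
  · intro x y hc hxy
    exact hpr (f x) (f y) (by rw [← map_mul, ← map_mul, hc])
      (by simpa [Set.mem_preimage, map_mul] using hxy)

/-- The prime partial ideal spectrum, as a contravariant functor from (possibly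
noncommutative) rings to sets. -/
def pSpec : RingCatᵒᵖ ⥤ Type where
  obj R := {P : Set ↥R.unop // IsPrimePartialIdeal P}
  map f := TypeCat.ofHom fun P => ⟨f.unop.hom ⁻¹' P.1, P.2.preimage f.unop.hom⟩

/-- The prime spectrum, as a contravariant functor from commutative rings to sets. -/
def SpecFunctor : CommRingCatᵒᵖ ⥤ Type where
  obj C := PrimeSpectrum C.unop
  map f := TypeCat.ofHom fun P => ⟨P.asIdeal.comap f.unop.hom, P.isPrime.comap _⟩

/-- In a commutative ring, a prime partial ideal is a prime ideal. -/
def toPrimeSpectrum {C : Type*} [CommRing C] (P : {P : Set C // IsPrimePartialIdeal P}) :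
    PrimeSpectrum C where
  asIdeal :=
    { carrier := P.1
      zero_mem' := P.2.1.1
      add_mem' := fun {a b} ha hb => P.2.1.2.1 a b (mul_comm a b) ha hb
      smul_mem' := fun c x hx => by
        simpa [smul_eq_mul] using P.2.1.2.2 c x (mul_comm c x) hx }
  isPrime :=
    { ne_top' := fun htop => IsPrimePartialIdeal.one_not_mem P.2 (Ideal.eq_top_iff_one _ |>.mp htop)
      mem_or_mem' := fun {x y} hxy => P.2.2.2 x y (mul_comm x y) hxy }

/-- On commutative rings, prime partial ideals are exactly prime ideals: the canonical
comparison natural transformation from the restriction of `pSpec` to `Spec`. -/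
def pSpecToSpec : (forget₂ CommRingCat RingCat).op ⋙ pSpec ⟶ SpecFunctor where
  app C := TypeCat.ofHom fun P => toPrimeSpectrum P

namespace PKan
noncomputable section
open Polynomial Opposite

abbrev PKA : CommRingCat := CommRingCat.of (Polynomial ℤ)
abbrev PKB : CommRingCat := CommRingCat.of (Polynomial (Polynomial ℤ))

lemma commute_aeval {S : Type*} [Ring S] {a b : S} (h : a * b = b * a) (p : Polynomial ℤ) :
    Commute (Polynomial.aeval a p) b := by
  induction p using Polynomial.induction_on' with
  | add p q hp hq => simpa [map_add] using hp.add_left hq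
  | monomial n c =>
      rw [Polynomial.aeval_monomial]
      exact ((Int.cast_commute c b).mul_left ((show Commute a b from h).pow_left n))

variable {R : RingCat}

/-- the hom `ℤ[X] → R`, `X ↦ a` -/
def φ (a : R) : (forget₂ CommRingCat RingCat).obj PKA ⟶ R :=
  RingCat.ofHom (Polynomial.aeval a).toRingHom

/-- the hom `ℤ[X][Y] → R`, with `C X ↦ a`, `X ↦ b` -/
def ψ {a b : R} (h : a * b = b * a) : (forget₂ CommRingCat RingCat).obj PKB ⟶ R :=
  RingCat.ofHom <| Polynomial.eval₂RingHom' (φ a).hom b (fun p => commute_aeval h p)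

lemma ψ_CX {a b : R} (h : a * b = b * a) : ψ h (Polynomial.C Polynomial.X) = a := by
  show Polynomial.eval₂ (φ a).hom b (Polynomial.C Polynomial.X) = a
  simp [φ]

lemma ψ_X {a b : R} (h : a * b = b * a) : ψ h (Polynomial.X) = b := by
  show Polynomial.eval₂ (φ a).hom b Polynomial.X = b
  simp

/-- `ℤ[X] → ℤ[X][Y]`, `X ↦ t` -/
def gmap (t : Polynomial (Polynomial ℤ)) : PKA ⟶ PKB := CommRingCat.ofHom (Polynomial.aeval t).toRingHom

lemma gmap_X (t : Polynomial (Polynomial ℤ)) : gmap t Polynomial.X = t := by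
  show Polynomial.aeval t (Polynomial.X : Polynomial ℤ) = t
  simp

lemma φ_comp_aeval {a b : R} (h : a * b = b * a) (t : Polynomial (Polynomial ℤ)) :
    ((forget₂ CommRingCat RingCat).map
        (gmap t)) ≫ ψ h = φ (ψ h t) := by
  apply RingCat.hom_ext
  show (ψ h).hom.comp (gmap t).hom = (φ (ψ h t)).hom
  apply Polynomial.ringHom_ext'
  · exact Subsingleton.elim _ _
  · show ψ h (Polynomial.aeval t (Polynomial.X : Polynomial ℤ)) =
        Polynomial.aeval (ψ h t) (Polynomial.X : Polynomial ℤ)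
    simp

variable (F : RingCatᵒᵖ ⥤ Type) (η : (forget₂ CommRingCat RingCat).op ⋙ F ⟶ SpecFunctor)

/-- the candidate membership predicate -/
def mem {Rop : RingCatᵒᵖ} (x : F.obj Rop) (a : Rop.unop) : Prop :=
  Polynomial.X ∈ PrimeSpectrum.asIdeal (η.app (op PKA) (F.map (φ a).op x))

lemma mem_key {Rop : RingCatᵒᵖ} (x : F.obj Rop) {a b : Rop.unop} (h : a * b = b * a)
    (t : Polynomial (Polynomial ℤ)) :
    mem F η x (ψ h t) ↔
      t ∈ PrimeSpectrum.asIdeal (η.app (op PKB) (F.map (ψ h).op x)) := by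
  have hnat := ConcreteCategory.congr_hom (η.naturality ((gmap t).op)) (F.map (ψ h).op x)
  simp only [types_comp_apply, Functor.comp_map, Functor.op_map] at hnat
  rw [mem, ← φ_comp_aeval h t, op_comp, FunctorToTypes.map_comp_apply]
  erw [hnat]
  show Polynomial.X ∈ Ideal.comap (gmap t).hom
      (η.app (op PKB) (F.map (ψ h).op x)).asIdeal ↔ _
  rw [Ideal.mem_comap]
  show (Polynomial.aeval t (Polynomial.X : Polynomial ℤ)) ∈
      (η.app (op PKB) (F.map (ψ h).op x)).asIdeal ↔ _
  rw [Polynomial.aeval_X]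


lemma φ_X {R : RingCat} (a : R) :
    ((φ a).hom : Polynomial ℤ → R) Polynomial.X = a := by
  show Polynomial.aeval a (Polynomial.X : Polynomial ℤ) = a
  simp

lemma isPrime_memSet {Rop : RingCatᵒᵖ} (x : F.obj Rop) :
    IsPrimePartialIdeal {a : ↥Rop.unop | mem F η x a} := by
  have key := fun {a b : ↥Rop.unop} (h : a * b = b * a) => mem_key F η x h
  have h00 : (0 : ↥Rop.unop) * 0 = 0 * 0 := rfl
  refine ⟨⟨?_, ?_, ?_⟩, ?_, ?_⟩
  · have := (key h00 0).mpr (Ideal.zero_mem _)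
    have hz : ψ h00 (0 : Polynomial (Polynomial ℤ)) = (0 : ↥Rop.unop) := map_zero _
    rwa [hz] at this
  · intro a b hc ha hb
    have ha' : mem F η x (ψ hc (Polynomial.C Polynomial.X)) := by rwa [ψ_CX]
    have hb' : mem F η x (ψ hc Polynomial.X) := by rwa [ψ_X]
    have hsum := (key hc _).mpr
      (Ideal.add_mem _ ((key hc _).mp ha') ((key hc _).mp hb'))
    rwa [map_add, ψ_CX, ψ_X] at hsum
  · intro a b hc hb
    have hb' : mem F η x (ψ hc Polynomial.X) := by rwa [ψ_X]
    have hprod := (key hc _).mpr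
      (Ideal.mul_mem_left _ (Polynomial.C Polynomial.X) ((key hc _).mp hb'))
    rwa [map_mul, ψ_CX, ψ_X] at hprod
  · intro hU
    have h1 : mem F η x 1 := Set.eq_univ_iff_forall.mp hU 1
    have h1' : mem F η x (ψ h00 (1 : Polynomial (Polynomial ℤ))) := by
      rwa [map_one]
    exact (η.app (op PKB) (F.map (ψ h00).op x)).isPrime.ne_top
      ((Ideal.eq_top_iff_one _).mpr ((key h00 1).mp h1'))
  · intro u v hc huv
    have huv' : mem F η x (ψ hc (Polynomial.C Polynomial.X * Polynomial.X)) := by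
      rwa [map_mul, ψ_CX, ψ_X]
    rcases (η.app (op PKB) (F.map (ψ hc).op x)).isPrime.mem_or_mem
        ((key hc _).mp huv') with hl | hr
    · left
      have := (key hc _).mpr hl
      rwa [ψ_CX] at this
    · right
      have := (key hc _).mpr hr
      rwa [ψ_X] at this

lemma hom_comp_φ {S R : RingCat} (f : S ⟶ R) (a : S) : φ a ≫ f = φ (f a) := by
  apply RingCat.hom_ext
  show RingHom.comp f.hom (Polynomial.aeval a).toRingHom = (Polynomial.aeval (f a)).toRingHom
  apply Polynomial.ringHom_ext'
  · exact Subsingleton.elim _ _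
  · show f (Polynomial.aeval a (Polynomial.X : Polynomial ℤ)) =
        Polynomial.aeval (f a) (Polynomial.X : Polynomial ℤ)
    simp

lemma mem_map {Rop Sop : RingCatᵒᵖ} (u : Rop ⟶ Sop) (x : F.obj Rop) (a : ↥Sop.unop) :
    mem F η (F.map u x) a ↔ mem F η x (u.unop a) := by
  show (Polynomial.X ∈ (η.app (op PKA) (F.map (φ a).op (F.map u x))).asIdeal) ↔
       (Polynomial.X ∈ (η.app (op PKA) (F.map (φ (u.unop a)).op x)).asIdeal)
  rw [← hom_comp_φ u.unop a, op_comp, FunctorToTypes.map_comp_apply, Quiver.Hom.op_unop]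

/-- the candidate natural transformation -/
def δ : F ⟶ pSpec where
  app Rop := TypeCat.ofHom fun x => ⟨{a | mem F η x a}, isPrime_memSet F η x⟩
  naturality Rop Sop u := by
    refine ConcreteCategory.hom_ext _ _ fun x => ?_
    apply Subtype.ext
    ext a
    show mem F η (F.map u x) a ↔ u.unop a ∈ {a | mem F η x a}
    exact mem_map F η u x a

/-- `ℤ[X] ⟶ C`, `X ↦ c`, as a morphism in `CommRingCat` -/
def gC {C : CommRingCat} (c : C) : PKA ⟶ C := CommRingCat.ofHom (Polynomial.aeval c).toRingHom

lemma restrict {C : CommRingCat} (x : F.obj (op ((forget₂ CommRingCat RingCat).obj C)))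
    (c : C) : mem F η x c ↔ c ∈ PrimeSpectrum.asIdeal (η.app (op C) x) := by
  have hnat := ConcreteCategory.congr_hom (η.naturality ((gC c).op)) x
  simp only [types_comp_apply, Functor.comp_map, Functor.op_map] at hnat
  have hφ : (forget₂ CommRingCat RingCat).map (gC c) = φ c := rfl
  rw [mem, ← hφ]
  erw [hnat]
  show Polynomial.X ∈ Ideal.comap (gC c).hom (η.app (op C) x).asIdeal ↔ _
  rw [Ideal.mem_comap]
  show (Polynomial.aeval c (Polynomial.X : Polynomial ℤ)) ∈ (η.app (op C) x).asIdeal ↔ _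
  rw [Polynomial.aeval_X]

lemma main (F : RingCatᵒᵖ ⥤ Type)
    (η : (forget₂ CommRingCat RingCat).op ⋙ F ⟶ SpecFunctor) :
    ∃! δ0 : F ⟶ pSpec,
      Functor.whiskerLeft (forget₂ CommRingCat RingCat).op δ0 ≫ pSpecToSpec = η := by
  refine ⟨δ F η, ?_, ?_⟩
  · apply NatTrans.ext
    funext Cop
    refine ConcreteCategory.hom_ext _ _ fun x => ?_
    simp only [NatTrans.comp_app, types_comp_apply, Functor.whiskerLeft_app]
    apply PrimeSpectrum.ext
    apply Ideal.ext
    intro c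
    show c ∈ {a | mem F η x a} ↔ c ∈ (η.app Cop x).asIdeal
    exact restrict F η x c
  · intro δ' hδ'
    apply NatTrans.ext
    funext Rop
    refine ConcreteCategory.hom_ext _ _ fun x => ?_
    apply Subtype.ext
    ext a
    have hn := ConcreteCategory.congr_hom (δ'.naturality ((φ a).op)) x
    simp only [types_comp_apply] at hn
    have hres := ConcreteCategory.congr_hom (congrFun (congrArg NatTrans.app hδ') (op PKA))
      (F.map (φ a).op x)
    simp only [NatTrans.comp_app, types_comp_apply, Functor.whiskerLeft_app] at hres
    -- hres : toPrimeSpectrum (δ'.app _ (F.map (φ a).op x)) = η.app (op PKA) (F.map (φ a).op x)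
    have hX : Polynomial.X ∈ (δ'.app _ (F.map (φ a).op x)).1 ↔ mem F η x a := by
      show Polynomial.X ∈
        (pSpecToSpec.app (op PKA) (δ'.app _ (F.map (φ a).op x))).asIdeal ↔ _
      rw [hres]
      exact Iff.rfl
    rw [hn] at hX
    show a ∈ (δ'.app Rop x).1 ↔ mem F η x a
    rw [← hX]
    show a ∈ (δ'.app Rop x).1 ↔
      Polynomial.aeval a (Polynomial.X : Polynomial ℤ) ∈ (δ'.app Rop x).1
    rw [Polynomial.aeval_X]

end
end PKan

/-- `pSpec`, with the canonical identification of its restriction to commutative rings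
with `Spec`, is the right Kan extension of `Spec` along the inclusion of the opposite
category of commutative rings into the opposite category of rings.  Concretely: for every
contravariant functor `F` from rings to sets and every natural transformation `η` from
the restriction of `F` to `Spec`, there is a unique natural transformation
`δ : F ⟶ pSpec` whose restriction to commutative rings is `η`. -/
theorem pSpec_isRightKanExtension :
    pSpec.IsRightKanExtension pSpecToSpec ∧
    ∀ (F : RingCatᵒᵖ ⥤ Type)
      (η : (forget₂ CommRingCat RingCat).op ⋙ F ⟶ SpecFunctor),
      ∃! δ : F ⟶ pSpec,
        Functor.whiskerLeft (forget₂ CommRingCat RingCat).op δ ≫ pSpecToSpec = η := by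
  refine ⟨⟨⟨?_⟩⟩, PKan.main⟩
  apply Limits.IsTerminal.ofUniqueHom
    (fun G => CostructuredArrow.homMk (PKan.main G.left G.hom).choose
      (PKan.main G.left G.hom).choose_spec.1)
  intro G m
  apply CostructuredArrow.hom_ext
  exact (PKan.main G.left G.hom).choose_spec.2 m.left m.w
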